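/- (Duality for the ellipsoidal distribution set.) Let p ∈ (1,∞) and q satisfy 1/p + 1/q = 1, let W ∈ ℝ^{K×K} be invertible, let π^nom ∈ S_K, and let Π = {π ∈ S_K : ‖W^{-1}(π − π^nom)‖_p ≤ 1}. Assume the Slater condition: there exists π ∈ ℝ^K with π > 0 componentwise, 𝟏ᵀπ = 1, and ‖W^{-1}(π − π^nom)‖_p < 1. Then for every y ∈ ℝ^K, inf_{π ∈ Π} πᵀ y = sup{ (π^nom)ᵀ(y − λ) − ‖Wᵀ(λ − y − μ𝟏)‖_q : μ ∈ ℝ, λ ∈ ℝ^K, λ ≥ 0 }. -/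

import Mathlib

open Matrix Finset

noncomputable def ED.pn {ι : Type*} [Fintype ι] (r : ℝ) (x : ι → ℝ) : ℝ :=
  (∑ k, |x k| ^ r) ^ (1/r)

namespace ED

variable {ι : Type*} [Fintype ι] [DecidableEq ι]

lemma pn_nonneg {r : ℝ} (x : ι → ℝ) : 0 ≤ pn r x :=
  Real.rpow_nonneg (Finset.sum_nonneg fun k _ => Real.rpow_nonneg (abs_nonneg _) _) _

lemma pn_zero {r : ℝ} (hr : 0 < r) : pn r (0 : ι → ℝ) = 0 := by
  have : (1:ℝ)/r ≠ 0 := by positivity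
  simp only [pn, Pi.zero_apply, abs_zero, Real.zero_rpow hr.ne', Finset.sum_const, smul_zero,
    one_div]
  rw [← one_div, Real.zero_rpow this]

lemma pn_neg {r : ℝ} (x : ι → ℝ) : pn r (-x) = pn r x := by
  simp [pn, abs_neg]

lemma holder {p q : ℝ} (hpq : p.HolderConjugate q) (f g : ι → ℝ) :
    ∑ k, f k * g k ≤ pn p f * pn q g :=
  Real.inner_le_Lp_mul_Lq Finset.univ f g hpq

lemma holder_neg {p q : ℝ} (hpq : p.HolderConjugate q) (f g : ι → ℝ) :
    -(pn p f * pn q g) ≤ ∑ k, f k * g k := by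
  have := Real.inner_le_Lp_mul_Lq Finset.univ (-f) g hpq
  simp only [Pi.neg_apply, neg_mul, Finset.sum_neg_distrib, abs_neg] at this
  have h2 : pn p (-f) = pn p f := pn_neg f
  simp only [pn] at h2 ⊢
  nlinarith [this]

lemma pn_smul {r : ℝ} (hr : 0 < r) (a : ℝ) (x : ι → ℝ) : pn r (a • x) = |a| * pn r x := by
  unfold pn
  have h1 : ∀ k, |(a • x) k| ^ r = |a| ^ r * |x k| ^ r := by
    intro k
    rw [Pi.smul_apply, smul_eq_mul, abs_mul, Real.mul_rpow (abs_nonneg _) (abs_nonneg _)]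
  simp_rw [h1, ← Finset.mul_sum]
  rw [Real.mul_rpow (by positivity) (Finset.sum_nonneg fun k _ => by positivity),
    ← Real.rpow_mul (abs_nonneg a), mul_one_div_cancel hr.ne', Real.rpow_one]

lemma pn_add_le {r : ℝ} (hr : 1 ≤ r) (x z : ι → ℝ) : pn r (x + z) ≤ pn r x + pn r z :=
  Real.Lp_add_le Finset.univ x z hr


lemma holder_attain {p q : ℝ} (hpq : p.HolderConjugate q) (w : ι → ℝ) :
    ∃ z : ι → ℝ, pn p z ≤ 1 ∧ ∑ k, z k * w k = pn q w := by
  have hq0 : 0 < q := hpq.symm.pos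
  by_cases hw : w = 0
  · refine ⟨0, ?_, ?_⟩
    · rw [pn_zero hpq.pos]; norm_num
    · simp [hw, pn_zero hq0]
  · have hS : 0 < ∑ k, |w k| ^ q := by
      obtain ⟨k, hk⟩ := Function.ne_iff.1 hw
      refine Finset.sum_pos' (fun k _ => by positivity) ⟨k, Finset.mem_univ k, ?_⟩
      have : 0 < |w k| := abs_pos.2 hk
      positivity
    set S := ∑ k, |w k| ^ q with hSdef
    set Nq := S ^ (1/q) with hNq
    have hNqpos : 0 < Nq := Real.rpow_pos_of_pos hS _
    have hNqq : Nq ^ q = S := by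
      rw [hNq, ← Real.rpow_mul hS.le, one_div, inv_mul_cancel₀ hq0.ne', Real.rpow_one]
    refine ⟨fun k => (if w k = 0 then 0 else |w k| ^ q / w k) / Nq ^ (q-1), ?_, ?_⟩
    · have habs : ∀ k, |(if w k = 0 then 0 else |w k| ^ q / w k) / Nq ^ (q-1)| ^ p
          = |w k| ^ q / S := by
        intro k
        by_cases hk : w k = 0
        · simp only [hk, if_true, zero_div, abs_zero, hk, abs_zero,
            Real.zero_rpow hpq.ne_zero, Real.zero_rpow hq0.ne', zero_div]
        · have hwk : 0 < |w k| := abs_pos.2 hk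
          have h1 : |(|w k| ^ q / w k) / Nq ^ (q-1)| = |w k| ^ (q-1) / Nq ^ (q-1) := by
            rw [abs_div, abs_div, abs_of_nonneg (Real.rpow_nonneg (abs_nonneg (w k)) q),
              abs_of_nonneg (Real.rpow_nonneg hNqpos.le (q-1)),
              Real.rpow_sub hwk, Real.rpow_one]
          rw [if_neg hk, h1, Real.div_rpow (Real.rpow_nonneg (abs_nonneg _) _)
              (Real.rpow_nonneg hNqpos.le _)]
          rw [← Real.rpow_mul (abs_nonneg _), ← Real.rpow_mul hNqpos.le,
            hpq.symm.sub_one_mul_conj, hNqq]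
      simp_rw [pn, habs, ← Finset.sum_div, ← hSdef, div_self hS.ne']
      rw [Real.one_rpow]
    · have hzw : ∀ k, ((if w k = 0 then 0 else |w k| ^ q / w k) / Nq ^ (q-1)) * w k
          = |w k| ^ q / Nq ^ (q-1) := by
        intro k
        by_cases hk : w k = 0
        · simp [hk, Real.zero_rpow hq0.ne']
        · rw [if_neg hk]
          field_simp
      simp_rw [hzw, ← Finset.sum_div, ← hSdef, ← hNqq]
      rw [← Real.rpow_sub hNqpos, show q - (q-1) = 1 by ring, Real.rpow_one, hNq, hSdef]
      simp [pn]


lemma dot_inv_transpose (W : Matrix ι ι ℝ) (hW : IsUnit W.det) (v c : ι → ℝ) :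
    ∑ k, (W⁻¹ *ᵥ v) k * (Wᵀ *ᵥ c) k = ∑ k, v k * c k := by
  have h1 : ∑ k, (W⁻¹ *ᵥ v) k * (Wᵀ *ᵥ c) k = (W⁻¹ *ᵥ v) ⬝ᵥ (Wᵀ *ᵥ c) := rfl
  rw [h1, Matrix.dotProduct_mulVec, Matrix.vecMul_transpose, Matrix.mulVec_mulVec,
    Matrix.mul_nonsing_inv W hW, Matrix.one_mulVec]
  rfl

lemma inv_mulVec_mulVec (W : Matrix ι ι ℝ) (hW : IsUnit W.det) (z : ι → ℝ) :
    W⁻¹ *ᵥ (W *ᵥ z) = z := by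
  rw [Matrix.mulVec_mulVec, Matrix.nonsing_inv_mul W hW, Matrix.one_mulVec]


lemma mulVec_dot (W : Matrix ι ι ℝ) (z c : ι → ℝ) :
    ∑ k, (W *ᵥ z) k * c k = ∑ k, z k * (Wᵀ *ᵥ c) k := by
  have h1 : ∑ k, z k * (Wᵀ *ᵥ c) k = z ⬝ᵥ (Wᵀ *ᵥ c) := rfl
  have h2 : ∑ k, (W *ᵥ z) k * c k = (W *ᵥ z) ⬝ᵥ c := rfl
  rw [h1, h2, Matrix.dotProduct_mulVec, Matrix.vecMul_transpose]

lemma weak_duality {p q : ℝ} (hpq : p.HolderConjugate q) (W : Matrix ι ι ℝ) (hW : IsUnit W.det)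
    (πnom : ι → ℝ) (hπnom1 : ∑ k, πnom k = 1) (y : ι → ℝ)
    (π : ι → ℝ) (hπ0 : ∀ k, 0 ≤ π k) (hπ1 : ∑ k, π k = 1)
    (hπB : pn p (W⁻¹ *ᵥ (π - πnom)) ≤ 1)
    (μ : ℝ) (lam : ι → ℝ) (hlam : ∀ k, 0 ≤ lam k) :
    ∑ k, πnom k * (y k - lam k) - pn q (Wᵀ *ᵥ (lam - y - fun _ => μ)) ≤ ∑ k, π k * y k := by
  set c : ι → ℝ := fun k => y k - lam k + μ with hc
  have hcneg : (lam - y - fun _ => μ) = -c := by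
    funext k; simp only [Pi.sub_apply, Pi.neg_apply, hc]; ring
  rw [hcneg, Matrix.mulVec_neg, pn_neg]
  have hdot := dot_inv_transpose W hW (π - πnom) c
  have hH := holder_neg hpq (W⁻¹ *ᵥ (π - πnom)) (Wᵀ *ᵥ c)
  have hq0 : (0:ℝ) ≤ pn q (Wᵀ *ᵥ c) := pn_nonneg _
  have hp1 : (0:ℝ) ≤ pn p (W⁻¹ *ᵥ (π - πnom)) := pn_nonneg _
  have h1 : -(pn q (Wᵀ *ᵥ c)) ≤ ∑ k, (π k - πnom k) * c k := by
    calc -(pn q (Wᵀ *ᵥ c)) ≤ -(pn p (W⁻¹ *ᵥ (π - πnom)) * pn q (Wᵀ *ᵥ c)) := by nlinarith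
    _ ≤ ∑ k, (W⁻¹ *ᵥ (π - πnom)) k * (Wᵀ *ᵥ c) k := hH
    _ = ∑ k, (π k - πnom k) * c k := by rw [hdot]; rfl
  have e1 : ∑ k, π k * c k = ∑ k, π k * y k - ∑ k, π k * lam k + μ := by
    have h : ∀ k ∈ Finset.univ, π k * c k = (π k * y k - π k * lam k) + μ * π k :=
      fun k _ => by simp only [hc]; ring
    rw [Finset.sum_congr rfl h, Finset.sum_add_distrib, Finset.sum_sub_distrib,
      ← Finset.mul_sum, hπ1, mul_one]
  have e2 : ∑ k, πnom k * c k = ∑ k, πnom k * (y k - lam k) + μ := by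
    have h : ∀ k ∈ Finset.univ, πnom k * c k = πnom k * (y k - lam k) + μ * πnom k :=
      fun k _ => by simp only [hc]; ring
    rw [Finset.sum_congr rfl h, Finset.sum_add_distrib, ← Finset.mul_sum, hπnom1, mul_one]
  have e3 : ∑ k, (π k - πnom k) * c k = ∑ k, π k * c k - ∑ k, πnom k * c k := by
    rw [← Finset.sum_sub_distrib]; exact Finset.sum_congr rfl fun k _ => by ring
  have hπlam : 0 ≤ ∑ k, π k * lam k :=
    Finset.sum_nonneg fun k _ => mul_nonneg (hπ0 k) (hlam k)
  linarith


set_option maxHeartbeats 1000000 in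
lemma separation {K : ℕ} {p q : ℝ} (hpq : p.HolderConjugate q)
    (W : Matrix (Fin K) (Fin K) ℝ) (πnom : Fin K → ℝ) (y : Fin K → ℝ)
    (π₀ : Fin K → ℝ) (hπ₀pos : ∀ k, 0 < π₀ k) (hπ₀1 : ∑ k, π₀ k = 1)
    (hπ₀B : pn p (W⁻¹ *ᵥ (π₀ - πnom)) < 1)
    (v0 ε : ℝ) (hε : 0 < ε)
    (hv0 : ∀ π : Fin K → ℝ, (∀ k, 0 ≤ π k) → ∑ k, π k = 1 →
      pn p (W⁻¹ *ᵥ (π - πnom)) ≤ 1 → v0 ≤ ∑ k, π k * y k) :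
    ∃ (μ : ℝ) (lam : Fin K → ℝ), (∀ k, 0 ≤ lam k) ∧
      ∀ π : Fin K → ℝ, pn p (W⁻¹ *ᵥ (π - πnom)) ≤ 1 →
        v0 - ε ≤ ∑ k, π k * y k - ∑ k, π k * lam k + μ * (∑ k, π k - 1) := by
  have hK : 0 < K := by
    by_contra h
    push_neg at h
    interval_cases K
    simp at hπ₀1
  have hKR : (1:ℝ) ≤ (K:ℝ) := by exact_mod_cast hK
  set i0 : Fin K := ⟨0, hK⟩ with hi0
  -- the convex set
  set C : Set ((Fin K → ℝ) × ℝ × ℝ) := {x | ∃ π : Fin K → ℝ,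
      pn p (W⁻¹ *ᵥ (π - πnom)) ≤ 1 ∧ (∀ k, -π k ≤ x.1 k) ∧
      ∑ k, π k = 1 + x.2.1 ∧ ∑ k, π k * y k ≤ x.2.2} with hC
  have hmemC : ∀ (π u : Fin K → ℝ) (s t : ℝ), pn p (W⁻¹ *ᵥ (π - πnom)) ≤ 1 →
      (∀ k, -π k ≤ u k) → ∑ k, π k = 1 + s → ∑ k, π k * y k ≤ t →
      ((u, s, t) : (Fin K → ℝ) × ℝ × ℝ) ∈ C :=
    fun π u s t h1 h2 h3 h4 => ⟨π, h1, h2, h3, h4⟩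
  -- convexity
  have hCconv : Convex ℝ C := by
    rintro x₁ ⟨π₁, hB₁, hu₁, hs₁, ht₁⟩ x₂ ⟨π₂, hB₂, hu₂, hs₂, ht₂⟩ a b ha hb hab
    refine ⟨a • π₁ + b • π₂, ?_, ?_, ?_, ?_⟩
    · have hsub : (a • π₁ + b • π₂) - πnom = a • (π₁ - πnom) + b • (π₂ - πnom) := by
        funext k
        simp only [Pi.add_apply, Pi.sub_apply, Pi.smul_apply, smul_eq_mul]
        linear_combination (πnom k) * hab
      rw [hsub, Matrix.mulVec_add, Matrix.mulVec_smul, Matrix.mulVec_smul]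
      calc pn p (a • (W⁻¹ *ᵥ (π₁ - πnom)) + b • (W⁻¹ *ᵥ (π₂ - πnom)))
          ≤ pn p (a • (W⁻¹ *ᵥ (π₁ - πnom))) + pn p (b • (W⁻¹ *ᵥ (π₂ - πnom))) :=
            pn_add_le hpq.lt.le _ _
        _ = a * pn p (W⁻¹ *ᵥ (π₁ - πnom)) + b * pn p (W⁻¹ *ᵥ (π₂ - πnom)) := by
            rw [pn_smul hpq.pos, pn_smul hpq.pos, abs_of_nonneg ha, abs_of_nonneg hb]
        _ ≤ a * 1 + b * 1 := add_le_add (mul_le_mul_of_nonneg_left hB₁ ha)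
            (mul_le_mul_of_nonneg_left hB₂ hb)
        _ = 1 := by rw [mul_one, mul_one, hab]
    · intro k
      have h1 := mul_le_mul_of_nonneg_left (hu₁ k) ha
      have h2 := mul_le_mul_of_nonneg_left (hu₂ k) hb
      simp only [Prod.fst_add, Prod.smul_fst, Pi.add_apply, Pi.smul_apply, smul_eq_mul]
      nlinarith
    · have e1 : ∑ k, (a • π₁ + b • π₂) k = a * ∑ k, π₁ k + b * ∑ k, π₂ k := by
        simp only [Pi.add_apply, Pi.smul_apply, smul_eq_mul]
        rw [Finset.sum_add_distrib, Finset.mul_sum, Finset.mul_sum]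
      rw [e1, hs₁, hs₂]
      simp only [Prod.snd_add, Prod.smul_snd, Prod.fst_add, Prod.smul_fst, smul_eq_mul]
      linear_combination hab
    · have e1 : ∑ k, (a • π₁ + b • π₂) k * y k
          = a * ∑ k, π₁ k * y k + b * ∑ k, π₂ k * y k := by
        simp only [Pi.add_apply, Pi.smul_apply, smul_eq_mul]
        rw [Finset.mul_sum, Finset.mul_sum, ← Finset.sum_add_distrib]
        exact Finset.sum_congr rfl fun k _ => by ring
      rw [e1]
      simp only [Prod.snd_add, Prod.smul_snd, smul_eq_mul]
      nlinarith [mul_le_mul_of_nonneg_left ht₁ ha, mul_le_mul_of_nonneg_left ht₂ hb]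
  -- interior point
  set N₀ := pn p (W⁻¹ *ᵥ (π₀ - πnom)) with hN₀def
  have hN₀0 : 0 ≤ N₀ := pn_nonneg _
  set onev : Fin K → ℝ := fun _ => 1 with honev
  set P1 := pn p (W⁻¹ *ᵥ onev) with hP1def
  have hP10 : 0 ≤ P1 := pn_nonneg _
  have hne : (Finset.univ : Finset (Fin K)).Nonempty := ⟨i0, Finset.mem_univ i0⟩
  set m := Finset.univ.inf' hne π₀ with hm
  have hm0 : 0 < m := (Finset.lt_inf'_iff hne).2 fun k _ => hπ₀pos k
  have hmle : ∀ k, m ≤ π₀ k := fun k => Finset.inf'_le _ (Finset.mem_univ k)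
  set Ysum := ∑ k, y k with hYsum
  set δ := min (min (m/4) (1/(1 + |Ysum|))) ((1 - N₀)/(1 + P1)) with hδdef
  have hδ : 0 < δ := by
    refine lt_min (lt_min (by positivity) (by positivity)) ?_
    have : 0 < 1 - N₀ := by linarith
    positivity
  have hδ1 : δ ≤ m/4 := le_trans (min_le_left _ _) (min_le_left _ _)
  have hδ2 : δ * (1 + |Ysum|) ≤ 1 := by
    have h : δ ≤ 1/(1 + |Ysum|) := le_trans (min_le_left _ _) (min_le_right _ _)
    have hpos : (0:ℝ) < 1 + |Ysum| := by positivity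
    calc δ * (1 + |Ysum|) ≤ (1/(1 + |Ysum|)) * (1 + |Ysum|) :=
          mul_le_mul_of_nonneg_right h hpos.le
      _ = 1 := by field_simp
  have hδ3 : δ * (1 + P1) ≤ 1 - N₀ := by
    have h := min_le_right (min (m/4) (1/(1 + |Ysum|))) ((1 - N₀)/(1 + P1))
    have hpos : (0:ℝ) < 1 + P1 := by positivity
    calc δ * (1 + P1) ≤ ((1 - N₀)/(1 + P1)) * (1 + P1) :=
          mul_le_mul_of_nonneg_right h hpos.le
      _ = 1 - N₀ := by field_simp
  set t₀ : ℝ := ∑ k, π₀ k * y k + 1 with ht₀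
  set z₀ : (Fin K → ℝ) × ℝ × ℝ := (fun k => -(π₀ k)/2, 0, t₀) with hz₀def
  have hz₀ : z₀ ∈ interior C := by
    rw [mem_interior]
    refine ⟨Metric.ball z₀ δ, ?_, Metric.isOpen_ball, Metric.mem_ball_self hδ⟩
    intro x hxball
    have hd : dist x z₀ < δ := Metric.mem_ball.1 hxball
    have hd1 : dist x.1 z₀.1 < δ := lt_of_le_of_lt (by rw [Prod.dist_eq]; exact le_max_left _ _) hd
    have hd2 : dist x.2 z₀.2 < δ := lt_of_le_of_lt (by rw [Prod.dist_eq]; exact le_max_right _ _) hd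
    have hdu : ∀ k, |x.1 k - (-(π₀ k)/2)| < δ := by
      intro k
      have := dist_le_pi_dist x.1 z₀.1 k
      rw [Real.dist_eq] at this
      exact lt_of_le_of_lt this hd1
    have hds : |x.2.1| < δ := by
      have h := lt_of_le_of_lt (by rw [Prod.dist_eq]; exact le_max_left _ _ :
        dist x.2.1 z₀.2.1 ≤ dist x.2 z₀.2) hd2
      rw [Real.dist_eq] at h
      simpa [hz₀def] using h
    have hdt : |x.2.2 - t₀| < δ := by
      have h := lt_of_le_of_lt (by rw [Prod.dist_eq]; exact le_max_right _ _ :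
        dist x.2.2 z₀.2.2 ≤ dist x.2 z₀.2) hd2
      rw [Real.dist_eq] at h
      exact h
    have hsK : |x.2.1 / K| ≤ |x.2.1| := by
      rw [abs_div, abs_of_nonneg (by positivity : (0:ℝ) ≤ (K:ℝ))]
      exact div_le_self (abs_nonneg _) hKR
    have hsKδ : |x.2.1 / K| < δ := lt_of_le_of_lt hsK hds
    refine ⟨π₀ + fun _ => x.2.1 / K, ?_, ?_, ?_, ?_⟩
    · -- ball
      have hsub : (π₀ + fun _ => x.2.1 / K) - πnom = (π₀ - πnom) + (x.2.1/K) • onev := by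
        funext k
        simp only [Pi.add_apply, Pi.sub_apply, Pi.smul_apply, smul_eq_mul, honev]
        ring
      rw [hsub, Matrix.mulVec_add, Matrix.mulVec_smul]
      calc pn p ((W⁻¹ *ᵥ (π₀ - πnom)) + (x.2.1/K) • (W⁻¹ *ᵥ onev))
          ≤ N₀ + pn p ((x.2.1/K) • (W⁻¹ *ᵥ onev)) := pn_add_le hpq.lt.le _ _
        _ = N₀ + |x.2.1/K| * P1 := by rw [pn_smul hpq.pos]
        _ ≤ 1 := by nlinarith [mul_le_mul_of_nonneg_right hsKδ.le hP10]
    · -- u component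
      intro k
      have h1 := (abs_lt.1 (hdu k)).1
      have h2 := (abs_lt.1 hsKδ).1
      have h3 := hmle k
      have h4 := hδ1
      simp only [Pi.add_apply]
      have : -(x.2.1 / K) ≤ |x.2.1 / K| := neg_le_abs _
      nlinarith [abs_nonneg (x.2.1/K)]
    · -- sum component
      simp only [Pi.add_apply]
      rw [Finset.sum_add_distrib, hπ₀1, Finset.sum_const, Finset.card_univ,
        Fintype.card_fin, nsmul_eq_mul]
      rw [mul_div_cancel₀ _ (by positivity : (K:ℝ) ≠ 0)]
    · -- t component
      have e1 : ∑ k, ((π₀ + fun _ => x.2.1 / K : Fin K → ℝ)) k * y k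
          = ∑ k, π₀ k * y k + (x.2.1/K) * Ysum := by
        simp only [Pi.add_apply, add_mul]
        rw [Finset.sum_add_distrib, ← Finset.mul_sum]
      rw [e1]
      have h1 : (x.2.1/K) * Ysum ≤ |x.2.1/K| * |Ysum| := by
        calc (x.2.1/K) * Ysum ≤ |(x.2.1/K) * Ysum| := le_abs_self _
          _ = |x.2.1/K| * |Ysum| := abs_mul _ _
      have h2 : |x.2.1/K| * |Ysum| ≤ δ * |Ysum| :=
        mul_le_mul_of_nonneg_right hsKδ.le (abs_nonneg _)
      have h3 := (abs_lt.1 hdt).1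
      nlinarith [hδ.le]
  -- the point to separate
  set x₀ : (Fin K → ℝ) × ℝ × ℝ := (0, 0, v0 - ε) with hx₀def
  have hx₀ : x₀ ∉ C := by
    rintro ⟨π, hB, hu, hs, ht⟩
    have h0 : ∀ k, 0 ≤ π k := by
      intro k
      have := hu k
      simp only [hx₀def, Pi.zero_apply] at this
      linarith
    have h1 : ∑ k, π k = 1 := by
      have := hs; simp only [hx₀def] at this; linarith
    have := hv0 π h0 h1 hB
    have ht' : ∑ k, π k * y k ≤ v0 - ε := ht
    linarith
  obtain ⟨f, hsep⟩ := geometric_hahn_banach_open_point hCconv.interior isOpen_interior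
    (fun h => hx₀ (interior_subset h))
  -- extend the strict inequality to all of C
  have hfC : ∀ a ∈ C, f a ≤ f x₀ := by
    intro a ha
    by_contra hcon
    push_neg at hcon
    set d := f a - f x₀ with hd
    have hd0 : 0 < d := by linarith
    set t := min 1 (d / (|f z₀ - f a| + 1)) with htdef
    have ht0 : 0 < t := lt_min one_pos (by positivity)
    have ht1 : t ≤ 1 := min_le_left _ _
    have hmem : t • z₀ + (1 - t) • a ∈ interior C :=
      hCconv.combo_interior_self_mem_interior hz₀ ha ht0 (by linarith) (by ring)
    have hlt := hsep _ hmem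
    rw [map_add, _root_.map_smul, _root_.map_smul, smul_eq_mul, smul_eq_mul] at hlt
    have hb : t * (|f z₀ - f a| + 1) ≤ d := by
      calc t * (|f z₀ - f a| + 1)
          ≤ (d / (|f z₀ - f a| + 1)) * (|f z₀ - f a| + 1) :=
            mul_le_mul_of_nonneg_right (min_le_right _ _) (by positivity)
        _ = d := div_mul_cancel₀ _ (by positivity)
    have h5 : -(t * (|f z₀ - f a|)) ≤ t * (f z₀ - f a) := by
      have := neg_abs_le (f z₀ - f a)
      nlinarith
    have h6 : t * |f z₀ - f a| ≤ t * (|f z₀ - f a| + 1) := by nlinarith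
    have e : t * f z₀ + (1 - t) * f a = f a + t * (f z₀ - f a) := by ring
    rw [e] at hlt
    linarith
  -- linear expansion of f
  have hsingle : ∀ (u : Fin K → ℝ) (k : Fin K),
      u k • ((Pi.single k 1 : Fin K → ℝ)) = Pi.single k (u k) := by
    intro u k
    rw [← Pi.single_smul]
    norm_num
  have hexp : ∀ (u : Fin K → ℝ) (s t : ℝ),
      f (u, s, t) = (∑ k, u k * f (Pi.single k 1, 0, 0)) + s * f (0, 1, 0) + t * f (0, 0, 1) := by
    intro u s t
    have h1 : ((u, s, t) : (Fin K → ℝ) × ℝ × ℝ)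
        = (∑ k, u k • (((Pi.single k 1 : Fin K → ℝ), (0:ℝ), (0:ℝ))
            : (Fin K → ℝ) × ℝ × ℝ))
          + s • (((0 : Fin K → ℝ), (1:ℝ), (0:ℝ)) : (Fin K → ℝ) × ℝ × ℝ)
          + t • (((0 : Fin K → ℝ), (0:ℝ), (1:ℝ)) : (Fin K → ℝ) × ℝ × ℝ) := by
      have hfst : (∑ k, u k • (((Pi.single k 1 : Fin K → ℝ), (0:ℝ), (0:ℝ))
          : (Fin K → ℝ) × ℝ × ℝ)).1 = u := by
        rw [Prod.fst_sum]
        simp only [Prod.smul_fst]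
        simp_rw [hsingle u]
        exact Finset.univ_sum_single u
      have hsnd : (∑ k, u k • (((Pi.single k 1 : Fin K → ℝ), (0:ℝ), (0:ℝ))
          : (Fin K → ℝ) × ℝ × ℝ)).2 = (0 : ℝ × ℝ) := by
        rw [Prod.snd_sum]
        simp
      apply Prod.ext
      · rw [Prod.fst_add, Prod.fst_add, hfst]
        simp
      · rw [Prod.snd_add, Prod.snd_add, hsnd]
        apply Prod.ext <;> simp
    rw [h1, map_add, map_add, map_sum]
    simp only [_root_.map_smul, smul_eq_mul]
  -- multipliers
  set F1 : Fin K → ℝ := fun k => f (Pi.single k 1, 0, 0) with hF1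
  set F2 : ℝ := f (0, 1, 0) with hF2
  set F3 : ℝ := f (0, 0, 1) with hF3
  have hx₀eval : f x₀ = (v0 - ε) * F3 := by
    have h3 := hexp 0 0 (v0 - ε)
    simp only [Pi.zero_apply, zero_mul, Finset.sum_const_zero, zero_add, add_zero] at h3
    rw [hx₀def]
    exact h3
  have hCge : ∀ a ∈ C, (∑ k, a.1 k * F1 k) + a.2.1 * F2 + a.2.2 * F3 ≤ (v0 - ε) * F3 := by
    intro a ha
    have h := hfC a ha
    have h2 := hexp a.1 a.2.1 a.2.2
    have ha' : ((a.1, a.2.1, a.2.2) : (Fin K → ℝ) × ℝ × ℝ) = a := rfl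
    rw [ha'] at h2
    rw [h2, hx₀eval] at h
    exact h
  set lam0 : Fin K → ℝ := fun k => -F1 k with hlam0def
  set μ0 : ℝ := -F2 with hμ0def
  set ν : ℝ := -F3 with hνdef
  have hCge' : ∀ a ∈ C,
      (v0 - ε) * ν ≤ (∑ k, a.1 k * lam0 k) + a.2.1 * μ0 + a.2.2 * ν := by
    intro a ha
    have h := hCge a ha
    have hsum : ∑ k, a.1 k * lam0 k = -∑ k, a.1 k * F1 k := by
      rw [← Finset.sum_neg_distrib]
      exact Finset.sum_congr rfl fun k _ => by simp only [hlam0def]; ring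
    rw [hsum, hμ0def, hνdef]
    linarith
  have hπ₀B' : pn p (W⁻¹ *ᵥ (π₀ - πnom)) ≤ 1 := hπ₀B.le
  set Vy : ℝ := ∑ k, π₀ k * y k with hVy
  have hmemπ₀ : ∀ T : ℝ, 0 ≤ T →
      (((-π₀ : Fin K → ℝ), (0:ℝ), Vy + T) : (Fin K → ℝ) × ℝ × ℝ) ∈ C := by
    intro T hT
    exact hmemC π₀ (-π₀) 0 (Vy + T) hπ₀B' (fun k => le_refl _) (by rw [hπ₀1]; ring)
      (by rw [hVy]; linarith)
  set A : ℝ := ∑ k, (-π₀ : Fin K → ℝ) k * lam0 k with hA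
  have hν0 : 0 ≤ ν := by
    by_contra hcon
    push_neg at hcon
    set T : ℝ := max 0 (((v0 - ε) * ν - A - Vy * ν - 1)/ν) with hT
    have hT0 : 0 ≤ T := le_max_left _ _
    have h1 := hCge' _ (hmemπ₀ T hT0)
    simp only at h1
    have hTν : T * ν ≤ (v0 - ε) * ν - A - Vy * ν - 1 := by
      have h2 := mul_le_mul_of_nonpos_right (le_max_right 0 (((v0 - ε) * ν - A - Vy * ν - 1)/ν))
        hcon.le
      rw [div_mul_cancel₀ _ (ne_of_lt hcon)] at h2
      exact h2
    nlinarith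
  have hlam0pos : ∀ k0, 0 ≤ lam0 k0 := by
    intro k0
    by_contra hcon
    push_neg at hcon
    set T : ℝ := max 0 (((v0 - ε) * ν - A - Vy * ν - 1)/lam0 k0) with hT
    have hT0 : 0 ≤ T := le_max_left _ _
    set u : Fin K → ℝ := fun j => -π₀ j + T * (Pi.single k0 1 : Fin K → ℝ) j with hu
    have hsingle_nonneg : ∀ j, (0:ℝ) ≤ (Pi.single k0 1 : Fin K → ℝ) j := by
      intro j
      rw [Pi.single_apply]
      split <;> norm_num
    have humem : (((u : Fin K → ℝ), (0:ℝ), Vy) : (Fin K → ℝ) × ℝ × ℝ) ∈ C := by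
      refine hmemC π₀ u 0 Vy hπ₀B' (fun j => ?_) (by rw [hπ₀1]; ring) (by rw [hVy])
      have := mul_nonneg hT0 (hsingle_nonneg j)
      simp only [hu]
      linarith
    have h1 := hCge' _ humem
    simp only at h1
    have e2 : ∑ j, u j * lam0 j = A + T * lam0 k0 := by
      have e3 : ∀ j ∈ Finset.univ, u j * lam0 j
          = (-π₀ : Fin K → ℝ) j * lam0 j + T * ((Pi.single k0 1 : Fin K → ℝ) j * lam0 j) := by
        intro j _
        simp only [hu, Pi.neg_apply]
        ring
      rw [Finset.sum_congr rfl e3, Finset.sum_add_distrib, ← Finset.mul_sum]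
      have e4 : ∑ j, (Pi.single k0 1 : Fin K → ℝ) j * lam0 j = lam0 k0 := by
        simp [Pi.single_apply, ite_mul]
      rw [e4, hA]
    rw [e2] at h1
    have hTν : T * lam0 k0 ≤ (v0 - ε) * ν - A - Vy * ν - 1 := by
      have h2 := mul_le_mul_of_nonpos_right
        (le_max_right 0 (((v0 - ε) * ν - A - Vy * ν - 1)/lam0 k0)) hcon.le
      rw [div_mul_cancel₀ _ (ne_of_lt hcon)] at h2
      exact h2
    nlinarith
  have hνpos : 0 < ν := by
    rcases hν0.lt_or_eq with h | hzero
    · exact h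
    · exfalso
      -- all lam0 vanish
      have h1 := hCge' _ (hmemπ₀ 0 (le_refl 0))
      rw [← hzero] at h1
      have hA1 : ∑ k, (-π₀ : Fin K → ℝ) k * lam0 k = -∑ k, π₀ k * lam0 k := by
        rw [← Finset.sum_neg_distrib]
        exact Finset.sum_congr rfl fun k _ => by simp
      simp only [mul_zero, zero_mul, add_zero] at h1
      rw [hA1] at h1
      have hsum0 : ∑ k, π₀ k * lam0 k ≤ 0 := by linarith
      have hsum0' : ∑ k, π₀ k * lam0 k = 0 :=
        le_antisymm hsum0 (Finset.sum_nonneg fun k _ =>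
          mul_nonneg (hπ₀pos k).le (hlam0pos k))
      have hall : ∀ k, lam0 k = 0 := by
        intro k
        have := (Finset.sum_eq_zero_iff_of_nonneg
          (fun k _ => mul_nonneg (hπ₀pos k).le (hlam0pos k))).1 hsum0' k (Finset.mem_univ k)
        rcases mul_eq_zero.1 this with h' | h'
        · exact absurd h' (hπ₀pos k).ne'
        · exact h'
      -- perturbation argument forcing μ0 = 0
      set e1v : Fin K → ℝ := Pi.single i0 1 with he1v
      have hsum_e1v : ∑ j, e1v j = 1 := by simp [he1v]
      set Pe : ℝ := pn p (W⁻¹ *ᵥ e1v) with hPe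
      have hPe0 : 0 ≤ Pe := pn_nonneg _
      set δ' : ℝ := (1 - N₀)/(Pe + 1) with hδ'
      have hδ'0 : 0 < δ' := by
        have : (0:ℝ) < 1 - N₀ := by linarith
        positivity
      have hδ'Pe : δ' * (Pe + 1) = 1 - N₀ := div_mul_cancel₀ _ (by positivity)
      have hball : ∀ s : ℝ, |s| ≤ δ' →
          pn p (W⁻¹ *ᵥ ((π₀ + s • e1v) - πnom)) ≤ 1 := by
        intro s hs
        have hsub : (π₀ + s • e1v) - πnom = (π₀ - πnom) + s • e1v := by
          funext j
          simp only [Pi.add_apply, Pi.sub_apply, Pi.smul_apply, smul_eq_mul]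
          ring
        rw [hsub, Matrix.mulVec_add, Matrix.mulVec_smul]
        calc pn p ((W⁻¹ *ᵥ (π₀ - πnom)) + s • (W⁻¹ *ᵥ e1v))
            ≤ N₀ + pn p (s • (W⁻¹ *ᵥ e1v)) := pn_add_le hpq.lt.le _ _
          _ = N₀ + |s| * Pe := by rw [pn_smul hpq.pos]
          _ ≤ 1 := by nlinarith [mul_le_mul_of_nonneg_right hs hPe0]
      have hmemδ : ∀ s : ℝ, |s| ≤ δ' →
          ((-(π₀ + s • e1v), s, ∑ k, (π₀ + s • e1v) k * y k) : (Fin K → ℝ) × ℝ × ℝ) ∈ C := by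
        intro s hs
        refine hmemC (π₀ + s • e1v) (-(π₀ + s • e1v)) s _ (hball s hs)
          (fun k => le_refl _) ?_ (le_refl _)
        simp only [Pi.add_apply, Pi.smul_apply, smul_eq_mul]
        rw [Finset.sum_add_distrib, hπ₀1, ← Finset.mul_sum, hsum_e1v, mul_one]
      have hμ00 : ∀ s : ℝ, |s| ≤ δ' → 0 ≤ s * μ0 := by
        intro s hs
        have h2 := hCge' _ (hmemδ s hs)
        rw [← hzero] at h2
        have hzerosum : ∑ k, (-(π₀ + s • e1v)) k * lam0 k = 0 :=
          Finset.sum_eq_zero fun k _ => by rw [hall k, mul_zero]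
        simp only [mul_zero, zero_mul, add_zero] at h2
        rw [hzerosum] at h2
        linarith
      have hμ0eq : μ0 = 0 := by
        have hp1 := hμ00 δ' (by rw [abs_of_pos hδ'0])
        have hp2 := hμ00 (-δ') (by rw [abs_neg, abs_of_pos hδ'0])
        nlinarith
      -- contradiction with the strict separation at z₀
      have h2 := hsep z₀ hz₀
      have h3 := hexp z₀.1 z₀.2.1 z₀.2.2
      have hz' : ((z₀.1, z₀.2.1, z₀.2.2) : (Fin K → ℝ) × ℝ × ℝ) = z₀ := rfl
      rw [hz'] at h3
      have hF1z : ∀ k, F1 k = 0 := by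
        intro k
        have := hall k
        simp only [hlam0def] at this
        linarith
      have hF2z : F2 = 0 := by
        simp only [hμ0def] at hμ0eq
        linarith
      have hF3z : F3 = 0 := by
        simp only [hνdef] at hzero
        linarith
      rw [hx₀eval, hF3z] at h2
      rw [h3] at h2
      simp only [hF2z, hF3z, mul_zero, add_zero, zero_mul] at h2
      have : ∑ k, z₀.1 k * F1 k = 0 :=
        Finset.sum_eq_zero fun k _ => by rw [hF1z k, mul_zero]
      rw [this] at h2
      linarith
  -- conclusion
  refine ⟨μ0/ν, fun k => lam0 k/ν, fun k => div_nonneg (hlam0pos k) hν0, ?_⟩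
  intro π hπB
  have hmem := hmemC π (-π) (∑ k, π k - 1) (∑ k, π k * y k) hπB (fun k => le_refl _)
    (by ring) (le_refl _)
  have h1 := hCge' _ hmem
  simp only at h1
  have hs1 : ∑ k, (-π) k * lam0 k = -∑ k, π k * lam0 k := by
    rw [← Finset.sum_neg_distrib]
    exact Finset.sum_congr rfl fun k _ => by simp
  rw [hs1] at h1
  have hs2 : ∑ k, π k * (lam0 k / ν) = (∑ k, π k * lam0 k) / ν := by
    rw [Finset.sum_div]
    exact Finset.sum_congr rfl fun k _ => (mul_div_assoc _ _ _).symm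
  rw [hs2]
  set Yv : ℝ := ∑ k, π k * y k with hYv
  set Sv : ℝ := ∑ k, π k * lam0 k with hSv
  set Mv : ℝ := ∑ k, π k with hMv
  -- h1 : (v0 - ε) * ν ≤ -Sv + (Mv - 1) * μ0 + Yv * ν
  have hνne : ν ≠ 0 := hνpos.ne'
  have e : (Yv - Sv/ν + (μ0/ν)*(Mv - 1)) * ν = Yv*ν - Sv + μ0*(Mv - 1) := by
    field_simp
  have h3 : (v0 - ε)*ν ≤ (Yv - Sv/ν + (μ0/ν)*(Mv - 1)) * ν := by
    rw [e]
    linarith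
  exact le_of_mul_le_mul_right h3 hνpos

end ED

set_option maxHeartbeats 1000000 in
/-- Duality for the ellipsoidal distribution set
`Π = {π ∈ S_K : ‖W⁻¹(π − π^nom)‖_p ≤ 1}`, under a Slater condition: for every `y`,
`inf_{π ∈ Π} πᵀ y = sup_{μ ∈ ℝ, λ ≥ 0} ( (π^nom)ᵀ (y − λ) − ‖Wᵀ(λ − y − μ 𝟏)‖_q )`. -/
theorem ellipsoidal_duality (K : ℕ) (p q : ℝ) (hp : 1 < p) (hpq : 1 / p + 1 / q = 1)
    (W : Matrix (Fin K) (Fin K) ℝ) (hW : IsUnit W.det)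
    (πnom : Fin K → ℝ) (hπnom : ∀ k, 0 ≤ πnom k) (hπnom1 : ∑ k, πnom k = 1)
    (slater : ∃ π : Fin K → ℝ, (∀ k, 0 < π k) ∧ ∑ k, π k = 1 ∧
      (∑ k, |(W⁻¹ *ᵥ (π - πnom)) k| ^ p) ^ (1 / p) < 1)
    (y : Fin K → ℝ) :
    sInf {v : ℝ | ∃ π : Fin K → ℝ, (∀ k, 0 ≤ π k) ∧ ∑ k, π k = 1 ∧
        (∑ k, |(W⁻¹ *ᵥ (π - πnom)) k| ^ p) ^ (1 / p) ≤ 1 ∧ v = ∑ k, π k * y k} =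
      sSup {v : ℝ | ∃ (μ : ℝ) (lam : Fin K → ℝ), (∀ k, 0 ≤ lam k) ∧
        v = ∑ k, πnom k * (y k - lam k)
            - (∑ k, |(Wᵀ *ᵥ (lam - y - fun _ => μ)) k| ^ q) ^ (1 / q)} := by
  classical
  have hq : p.HolderConjugate q := Real.holderConjugate_iff.mpr ⟨hp, by simpa [one_div] using hpq⟩
  obtain ⟨π₀, hπ₀pos, hπ₀1, hπ₀B⟩ := slater
  set Pset : Set ℝ := {v : ℝ | ∃ π : Fin K → ℝ, (∀ k, 0 ≤ π k) ∧ ∑ k, π k = 1 ∧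
      (∑ k, |(W⁻¹ *ᵥ (π - πnom)) k| ^ p) ^ (1 / p) ≤ 1 ∧ v = ∑ k, π k * y k} with hPset
  set Dset : Set ℝ := {v : ℝ | ∃ (μ : ℝ) (lam : Fin K → ℝ), (∀ k, 0 ≤ lam k) ∧
      v = ∑ k, πnom k * (y k - lam k)
          - (∑ k, |(Wᵀ *ᵥ (lam - y - fun _ => μ)) k| ^ q) ^ (1 / q)} with hDset
  have hπ₀B' : ED.pn p (W⁻¹ *ᵥ (π₀ - πnom)) < 1 := hπ₀B
  have hπnomB : ED.pn p (W⁻¹ *ᵥ (πnom - πnom)) ≤ 1 := by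
    rw [sub_self, Matrix.mulVec_zero, ED.pn_zero hq.pos]
    norm_num
  have hPne : Pset.Nonempty := ⟨∑ k, πnom k * y k, πnom, hπnom, hπnom1, hπnomB, rfl⟩
  have hDne : Dset.Nonempty := ⟨_, 0, 0, fun k => le_refl 0, rfl⟩
  have weak : ∀ d ∈ Dset, ∀ v ∈ Pset, d ≤ v := by
    rintro d ⟨μ, lam, hlam, rfl⟩ v ⟨π, hπ0, hπ1, hπB, rfl⟩
    exact ED.weak_duality hq W hW πnom hπnom1 y π hπ0 hπ1 hπB μ lam hlam
  obtain ⟨d₀, hd₀⟩ := hDne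
  obtain ⟨v₀', hv₀'⟩ := hPne
  have hbddP : BddBelow Pset := ⟨d₀, fun v hv => weak d₀ hd₀ v hv⟩
  have hbddD : BddAbove Dset := ⟨v₀', fun d hd => weak d hd v₀' hv₀'⟩
  have le1 : sSup Dset ≤ sInf Pset :=
    csSup_le ⟨d₀, hd₀⟩ fun d hd => le_csInf ⟨v₀', hv₀'⟩ fun v hv => weak d hd v hv
  have le2 : sInf Pset ≤ sSup Dset := by
    apply le_of_forall_pos_le_add
    intro ε hε
    have hv0 : ∀ π : Fin K → ℝ, (∀ k, 0 ≤ π k) → ∑ k, π k = 1 →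
        ED.pn p (W⁻¹ *ᵥ (π - πnom)) ≤ 1 → sInf Pset ≤ ∑ k, π k * y k :=
      fun π h1 h2 h3 => csInf_le hbddP ⟨π, h1, h2, h3, rfl⟩
    obtain ⟨μ, lam, hlam, hkey⟩ := ED.separation hq W πnom y π₀ hπ₀pos hπ₀1 hπ₀B'
      (sInf Pset) ε hε hv0
    set c : Fin K → ℝ := fun k => y k - lam k + μ with hc
    obtain ⟨z, hz1, hz2⟩ := ED.holder_attain hq (-(Wᵀ *ᵥ c))
    set π : Fin K → ℝ := πnom + W *ᵥ z with hπdef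
    have hπB : ED.pn p (W⁻¹ *ᵥ (π - πnom)) ≤ 1 := by
      have hsub : π - πnom = W *ᵥ z := by rw [hπdef]; abel
      rw [hsub, ED.inv_mulVec_mulVec W hW z]
      exact hz1
    have h1 := hkey π hπB
    -- rewrite the left-hand side of h1 into the dual objective value
    have ea : ∑ k, π k * y k - ∑ k, π k * lam k + μ * (∑ k, π k - 1)
        = ∑ k, π k * c k - μ := by
      have h : ∀ k ∈ Finset.univ, π k * c k = π k * y k - π k * lam k + μ * π k :=
        fun k _ => by simp only [hc]; ring
      rw [Finset.sum_congr rfl h, Finset.sum_add_distrib, Finset.sum_sub_distrib,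
        ← Finset.mul_sum]
      ring
    have eb : ∑ k, π k * c k = ∑ k, πnom k * c k + ∑ k, (W *ᵥ z) k * c k := by
      rw [← Finset.sum_add_distrib]
      exact Finset.sum_congr rfl fun k _ => by
        simp only [hπdef, Pi.add_apply]; ring
    have ec : ∑ k, (W *ᵥ z) k * c k = ∑ k, z k * (Wᵀ *ᵥ c) k := ED.mulVec_dot W z c
    have ed : ∑ k, z k * (Wᵀ *ᵥ c) k = -ED.pn q (Wᵀ *ᵥ c) := by
      have h : ∑ k, z k * (-(Wᵀ *ᵥ c)) k = -∑ k, z k * (Wᵀ *ᵥ c) k := by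
        rw [← Finset.sum_neg_distrib]
        exact Finset.sum_congr rfl fun k _ => by simp
      rw [ED.pn_neg] at hz2
      linarith [hz2, h]
    have ee : ∑ k, πnom k * c k = ∑ k, πnom k * (y k - lam k) + μ := by
      have h : ∀ k ∈ Finset.univ, πnom k * c k = πnom k * (y k - lam k) + μ * πnom k :=
        fun k _ => by simp only [hc]; ring
      rw [Finset.sum_congr rfl h, Finset.sum_add_distrib, ← Finset.mul_sum, hπnom1, mul_one]
    have ef : (lam - y - fun _ => μ) = -c := by
      funext k
      simp only [Pi.sub_apply, Pi.neg_apply, hc]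
      ring
    have eg : ED.pn q (Wᵀ *ᵥ (lam - y - fun _ => μ)) = ED.pn q (Wᵀ *ᵥ c) := by
      rw [ef, Matrix.mulVec_neg, ED.pn_neg]
    have hdval : (∑ k, πnom k * (y k - lam k)
        - (∑ k, |(Wᵀ *ᵥ (lam - y - fun _ => μ)) k| ^ q) ^ (1 / q)) ∈ Dset :=
      ⟨μ, lam, hlam, rfl⟩
    have hdv : sInf Pset - ε ≤ ∑ k, πnom k * (y k - lam k)
        - (∑ k, |(Wᵀ *ᵥ (lam - y - fun _ => μ)) k| ^ q) ^ (1 / q) := by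
      have hchain : ∑ k, π k * y k - ∑ k, π k * lam k + μ * (∑ k, π k - 1)
          = ∑ k, πnom k * (y k - lam k) - ED.pn q (Wᵀ *ᵥ c) := by
        rw [ea, eb, ec, ed, ee]
        ring
      have : ED.pn q (Wᵀ *ᵥ (lam - y - fun _ => μ))
          = (∑ k, |(Wᵀ *ᵥ (lam - y - fun _ => μ)) k| ^ q) ^ (1 / q) := rfl
      rw [← this, eg]
      linarith [h1, hchain.symm.le]
    have := le_csSup hbddD hdval
    linarith
  exact le_antisymm le2 le1
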